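/- Let $V$ be a finite-dimensional real inner product space with a basis $\alpha_1, \dots, \alpha_r$ satisfying $\langle \alpha_i, \alpha_j \rangle \le 0$ for all $i \neq j$, and let $\varpi_1, \dots, \varpi_r$ be the dual basis defined by $\langle \alpha_i, \varpi_j \rangle = \delta_{ij}$; assume furthermore $\langle \varpi_i, \varpi_j \rangle \ge 0$ for all $i, j$. Let $C^- = \{Y \in V \mid \langle \alpha_i, Y \rangle \le 0 \text{ for all } i\}$. If $(Y_s)_{s \in S}$ is a family of elements of $C^-$ such that for each $i$ the set $\{\langle \varpi_i, Y_s \rangle : s \in S\}$ is bounded above, then the element $Y \in V$ defined by $\langle \varpi_i, Y \rangle = \sup_{s \in S} \langle \varpi_i, Y_s \rangle$ for all $i$ also lies in $C^-$. -/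

import Mathlib

open scoped RealInnerProductSpace

/-- The negative Weyl chamber is stable under coordinatewise suprema in
fundamental-weight coordinates: if the `Y s` all satisfy `⟪αᵢ, Y s⟫ ≤ 0` and the
coordinates `⟪ϖᵢ, Y s⟫` are bounded above, then the element `Z` with
`⟪ϖᵢ, Z⟫ = ⨆ s, ⟪ϖᵢ, Y s⟫` also satisfies `⟪αᵢ, Z⟫ ≤ 0` for all `i`. -/
theorem stmt_3 {V : Type*} [NormedAddCommGroup V] [InnerProductSpace ℝ V]
    [FiniteDimensional ℝ V] {r : ℕ}
    (α : Module.Basis (Fin r) ℝ V) (ϖ : Fin r → V)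
    (hdual : ∀ i j, ⟪α i, ϖ j⟫ = if i = j then (1 : ℝ) else 0)
    (hobtuse : ∀ i j, i ≠ j → ⟪α i, α j⟫ ≤ 0)
    (hweights : ∀ i j, 0 ≤ ⟪ϖ i, ϖ j⟫)
    {S : Type*} [Nonempty S] (Y : S → V)
    (hmem : ∀ s i, ⟪α i, Y s⟫ ≤ 0)
    (hbdd : ∀ i, BddAbove (Set.range fun s => ⟪ϖ i, Y s⟫))
    (Z : V) (hZ : ∀ i, ⟪ϖ i, Z⟫ = ⨆ s, ⟪ϖ i, Y s⟫) :
    ∀ i, ⟪α i, Z⟫ ≤ 0 := by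
  have hrepr : ∀ (X : V) j, ⟪ϖ j, X⟫ = α.repr X j := by
    intro X j
    conv_lhs => rw [← α.sum_repr X]
    rw [inner_sum]
    have : ∀ i, ⟪ϖ j, (α.repr X i) • α i⟫ = α.repr X i * (if i = j then 1 else 0) := by
      intro i
      rw [real_inner_smul_right, real_inner_comm, hdual]
    simp only [this, mul_ite, mul_one, mul_zero]
    simp
  have hexp : ∀ X : V, X = ∑ j, ⟪ϖ j, X⟫ • α j := by
    intro X
    conv_lhs => rw [← α.sum_repr X]
    refine Finset.sum_congr rfl fun j _ => ?_
    rw [hrepr]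
  intro i
  have key : ∀ X : V, ⟪α i, X⟫ = ∑ j, ⟪ϖ j, X⟫ * ⟪α i, α j⟫ := by
    intro X
    conv_lhs => rw [hexp X]
    rw [inner_sum]
    exact Finset.sum_congr rfl fun j _ => real_inner_smul_right _ _ _
  apply le_of_forall_pos_le_add
  intro ε hε
  have hA : (0:ℝ) ≤ ⟪α i, α i⟫ := real_inner_self_nonneg
  set A : ℝ := ⟪α i, α i⟫ with hAdef
  set δ : ℝ := ε / (A + 1) with hδdef
  have hδ : 0 < δ := div_pos hε (by linarith)
  obtain ⟨s, hs⟩ : ∃ s, (⨆ t, ⟪ϖ i, Y t⟫) - δ < ⟪ϖ i, Y s⟫ :=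
    exists_lt_of_lt_ciSup (sub_lt_self _ hδ)
  have hci : ∀ j, 0 ≤ ⟪ϖ j, Z⟫ - ⟪ϖ j, Y s⟫ := fun j =>
    sub_nonneg.2 (by rw [hZ]; exact le_ciSup (hbdd j) s)
  have hi : ⟪ϖ i, Z⟫ - ⟪ϖ i, Y s⟫ ≤ δ := by rw [hZ]; linarith
  calc ⟪α i, Z⟫ = ⟪α i, Z - Y s⟫ + ⟪α i, Y s⟫ := by rw [inner_sub_right]; ring
    _ ≤ ⟪α i, Z - Y s⟫ := by linarith [hmem s i]
    _ = ∑ j, (⟪ϖ j, Z⟫ - ⟪ϖ j, Y s⟫) * ⟪α i, α j⟫ := by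
        rw [key]
        exact Finset.sum_congr rfl fun j _ => by rw [inner_sub_right]
    _ ≤ ∑ j, (if j = i then δ * A else 0) := by
        refine Finset.sum_le_sum fun j _ => ?_
        by_cases h : j = i
        · subst h
          simp only [if_pos rfl]
          exact mul_le_mul_of_nonneg_right hi hA
        · simp only [if_neg h]
          exact mul_nonpos_of_nonneg_of_nonpos (hci j) (hobtuse i j (Ne.symm h))
    _ = δ * A := by simp
    _ ≤ ε := by
        rw [hδdef]
        rw [div_mul_eq_mul_div, div_le_iff₀ (by linarith)]
        nlinarith
    _ = 0 + ε := by ring
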